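/- Fix a real parameter g with −2 < g < 2 and set h = √(1 − g²/4), G = g/h. Then for every (b₀,q₀) with q₀ > 0, the function b ↦ K(b,q₀)² is differentiable at b₀ with derivative 2·(b₀ + g·q₀)·K(b₀,q₀)² / B(b₀,q₀). (This is the (b-component of the) formula y_i = (u_i + g·q·b_i)·K²/B for the covariant tangent vector.) -/

import Mathlib

noncomputable def finsH (g : ℝ) : ℝ := Real.sqrt (1 - g ^ 2 / 4)

noncomputable def finsG (g : ℝ) : ℝ := g / finsH g

/-- The characteristic quadratic form `B(b,q) = b² + g·q·b + q²`. -/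
noncomputable def finsB (g b q : ℝ) : ℝ := b ^ 2 + g * q * b + q ^ 2

/-- `L(b,q) = q + (g/2)·b`. -/
noncomputable def finsL (g b q : ℝ) : ℝ := q + (g / 2) * b

/-- The piecewise-defined Finsleroid function `f` on the half-plane `q > 0`. -/
noncomputable def finsF (g b q : ℝ) : ℝ :=
  if 0 < b then -Real.arctan (finsG g / 2) + Real.arctan (finsL g b q / (finsH g * b))
  else if b < 0 then
    Real.pi - Real.arctan (finsG g / 2) + Real.arctan (finsL g b q / (finsH g * b))
  else Real.pi / 2 - Real.arctan (finsG g / 2)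

/-- The Finsleroid-regular metric function `K(b,q) = √(B(b,q))·exp(−(G/2)·f(b,q))`. -/
noncomputable def finsK (g b q : ℝ) : ℝ :=
  Real.sqrt (finsB g b q) * Real.exp (-(finsG g / 2) * finsF g b q)

lemma finsH_pos {g : ℝ} (hg1 : -2 < g) (hg2 : g < 2) : 0 < finsH g := by
  apply Real.sqrt_pos.mpr; nlinarith

lemma finsH_sq {g : ℝ} (hg1 : -2 < g) (hg2 : g < 2) : finsH g ^ 2 = 1 - g ^ 2 / 4 := by
  rw [finsH, Real.sq_sqrt]; nlinarith

lemma finsB_pos {g b q : ℝ} (hg1 : -2 < g) (hg2 : g < 2) (hq : 0 < q) :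
    0 < finsB g b q := by
  unfold finsB
  nlinarith [sq_nonneg (2 * b + g * q), mul_pos hq hq,
    mul_pos (by linarith : (0:ℝ) < 2 - g) (by linarith : (0:ℝ) < 2 + g)]

lemma finsB_eq {g b q : ℝ} (hg1 : -2 < g) (hg2 : g < 2) :
    finsB g b q = (finsH g * b) ^ 2 + finsL g b q ^ 2 := by
  have h2 := finsH_sq hg1 hg2
  unfold finsB finsL
  nlinarith [h2]

/-- smooth formula for `f` when `L > 0` -/
lemma finsF_eq_of_L_pos {g b q : ℝ} (hg1 : -2 < g) (hg2 : g < 2)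
    (hL : 0 < finsL g b q) :
    finsF g b q = Real.pi / 2 - Real.arctan (finsG g / 2)
      - Real.arctan (finsH g * b / finsL g b q) := by
  have hH := finsH_pos hg1 hg2
  unfold finsF
  rcases lt_trichotomy b 0 with hb | hb | hb
  · rw [if_neg (by linarith), if_pos hb]
    have hx : finsH g * b / finsL g b q < 0 := div_neg_of_neg_of_pos (by nlinarith) hL
    have h1 := Real.arctan_inv_of_neg hx
    rw [show (finsH g * b / finsL g b q)⁻¹ = finsL g b q / (finsH g * b) by
      rw [inv_div]] at h1
    rw [h1]; ring
  · subst hb; rw [if_neg (lt_irrefl 0), if_neg (lt_irrefl 0)]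
    simp
  · rw [if_pos hb]
    have hx : 0 < finsH g * b / finsL g b q := div_pos (by positivity) hL
    have h1 := Real.arctan_inv_of_pos hx
    rw [show (finsH g * b / finsL g b q)⁻¹ = finsL g b q / (finsH g * b) by
      rw [inv_div]] at h1
    rw [h1]; ring

lemma finsL_hasDerivAt (g q₀ b₀ : ℝ) :
    HasDerivAt (fun b => finsL g b q₀) (g / 2) b₀ := by
  have : HasDerivAt (fun b : ℝ => q₀ + (g / 2) * b) (g / 2) b₀ := by
    simpa using ((hasDerivAt_id b₀).const_mul (g / 2)).const_add q₀
  exact this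

lemma finsF_hasDerivAt (g : ℝ) (hg1 : -2 < g) (hg2 : g < 2)
    (b₀ q₀ : ℝ) (hq : 0 < q₀) :
    HasDerivAt (fun b => finsF g b q₀) (-(q₀ * finsH g) / finsB g b₀ q₀) b₀ := by
  have hH := finsH_pos hg1 hg2
  have hB := finsB_pos (b := b₀) hg1 hg2 hq
  have hBeq := finsB_eq (g := g) (b := b₀) (q := q₀) hg1 hg2
  have hL := finsL_hasDerivAt g q₀ b₀
  have hnum : HasDerivAt (fun b => finsH g * b) (finsH g) b₀ := by
    simpa using (hasDerivAt_id b₀).const_mul (finsH g)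
  rcases eq_or_ne b₀ 0 with rfl | hb0
  · -- b₀ = 0 : use the L > 0 formula
    have hL0 : 0 < finsL g 0 q₀ := by unfold finsL; simpa using hq
    have hLc : Continuous fun b => finsL g b q₀ := by
      unfold finsL; continuity
    have hev : ∀ᶠ b in nhds (0:ℝ), 0 < finsL g b q₀ :=
      (hLc.tendsto 0).eventually (eventually_gt_nhds hL0)
    have hLne : finsL g 0 q₀ ≠ 0 := ne_of_gt hL0
    have hdiv := hnum.div hL hLne
    have harc := hdiv.arctan
    have key : HasDerivAt (fun b => Real.pi / 2 - Real.arctan (finsG g / 2)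
        - Real.arctan (finsH g * b / finsL g b q₀))
        (-(q₀ * finsH g) / finsB g 0 q₀) 0 := by
      have h2 := harc.const_sub (Real.pi / 2 - Real.arctan (finsG g / 2))
      simp only [Pi.div_apply] at h2
      refine h2.congr_deriv ?_
      symm
      have hL0' : finsL g 0 q₀ = q₀ := by unfold finsL; ring
      rw [hBeq, hL0']
      field_simp
      ring
    apply key.congr_of_eventuallyEq
    filter_upwards [hev] with b hb
    exact finsF_eq_of_L_pos hg1 hg2 hb
  · -- b₀ ≠ 0 : constant sign on a neighborhood
    have hbne : finsH g * b₀ ≠ 0 := mul_ne_zero (ne_of_gt hH) hb0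
    have hdiv := hL.div hnum hbne
    have harc := hdiv.arctan
    have hval : 1 / (1 + (finsL g b₀ q₀ / (finsH g * b₀)) ^ 2) *
        ((g / 2 * (finsH g * b₀) - finsL g b₀ q₀ * finsH g) / (finsH g * b₀) ^ 2)
        = -(q₀ * finsH g) / finsB g b₀ q₀ := by
      rw [hBeq]
      have hL' : finsL g b₀ q₀ = q₀ + (g / 2) * b₀ := rfl
      rw [hL']
      field_simp
      ring
    rcases lt_or_gt_of_ne hb0 with hbneg | hbpos
    · have key := harc.const_add (Real.pi - Real.arctan (finsG g / 2))
      simp only [Pi.div_apply] at key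
      replace key := key.congr_deriv hval
      apply key.congr_of_eventuallyEq
      filter_upwards [eventually_lt_nhds hbneg] with b hb
      unfold finsF
      rw [if_neg (by linarith), if_pos hb]
    · have key := harc.const_add (-Real.arctan (finsG g / 2))
      simp only [Pi.div_apply] at key
      replace key := key.congr_deriv hval
      apply key.congr_of_eventuallyEq
      filter_upwards [eventually_gt_nhds hbpos] with b hb
      unfold finsF
      rw [if_pos hb]

lemma finsK_sq (g b q : ℝ) (hg1 : -2 < g) (hg2 : g < 2) (hq : 0 < q) :
    finsK g b q ^ 2 = finsB g b q * Real.exp (-finsG g * finsF g b q) := by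
  have hB := finsB_pos (b := b) hg1 hg2 hq
  unfold finsK
  rw [mul_pow, Real.sq_sqrt hB.le, ← Real.exp_nat_mul]
  ring_nf

/-- for `q₀ > 0`, the function `b ↦ K(b,q₀)²` is differentiable at
any `b₀` with derivative `2·(b₀ + g·q₀)·K(b₀,q₀)² / B(b₀,q₀)`. -/
theorem finsleroid_Ksq_deriv_b (g : ℝ) (hg1 : -2 < g) (hg2 : g < 2)
    (b₀ q₀ : ℝ) (hq : 0 < q₀) :
    HasDerivAt (fun b : ℝ => (finsK g b q₀) ^ 2)
      (2 * (b₀ + g * q₀) * (finsK g b₀ q₀) ^ 2 / finsB g b₀ q₀) b₀ := by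
  have hH := finsH_pos hg1 hg2
  have hB := finsB_pos (b := b₀) hg1 hg2 hq
  have hGh : finsG g * finsH g = g := by
    unfold finsG; field_simp
  have hBd : HasDerivAt (fun b => finsB g b q₀) (2 * b₀ + g * q₀) b₀ := by
    have : HasDerivAt (fun b : ℝ => b ^ 2 + g * q₀ * b + q₀ ^ 2)
        (2 * b₀ + g * q₀) b₀ := by
      have h1 : HasDerivAt (fun b : ℝ => b ^ 2) (2 * b₀) b₀ := by
        simpa using hasDerivAt_pow 2 b₀
      have h2 : HasDerivAt (fun b : ℝ => g * q₀ * b) (g * q₀) b₀ := by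
        simpa using (hasDerivAt_id b₀).const_mul (g * q₀)
      simpa using (h1.add h2).add_const (q₀ ^ 2)
    exact this
  have hFd := finsF_hasDerivAt g hg1 hg2 b₀ q₀ hq
  have hEd : HasDerivAt (fun b => Real.exp (-finsG g * finsF g b q₀))
      (Real.exp (-finsG g * finsF g b₀ q₀) * (-finsG g * (-(q₀ * finsH g) / finsB g b₀ q₀)))
      b₀ := by
    exact ((hFd.const_mul (-finsG g)).exp)
  have hprod := hBd.mul hEd
  have key : HasDerivAt (fun b => finsB g b q₀ * Real.exp (-finsG g * finsF g b q₀))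
      (2 * (b₀ + g * q₀) * (finsK g b₀ q₀) ^ 2 / finsB g b₀ q₀) b₀ := by
    refine hprod.congr_deriv ?_
    symm
    rw [finsK_sq g b₀ q₀ hg1 hg2 hq]
    field_simp
    linear_combination (-q₀) * hGh
  apply key.congr_of_eventuallyEq
  filter_upwards with b
  rw [finsK_sq g b q₀ hg1 hg2 hq]
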